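/- Let p ∈ (0,1), let w₀ ∈ ℂ with w₀ ≠ 0, let f ∈ Σ*(p,w₀) with associated function P holomorphic on 𝔻, and write P(z) = 1 + b₁ z + b₂ z² + ⋯. Then b₂ = p² + 1/p² + (b₁ − (p + 1/p))² + 2 a₂(f) (b₁ − (p + 1/p)). -/

import Mathlib

open Complex Metric Set Filter Topology

/-- The second Taylor coefficient `a₂(f) = f''(0)/2`. -/
noncomputable def a2 (f : ℂ → ℂ) : ℂ := iteratedDeriv 2 f 0 / 2

/-- `f` belongs to the class `Σ*(p, w₀)` with associated holomorphic function `P`: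
`f` is holomorphic on the unit disc except for a simple pole at `p`, `f 0 = 0`,
`f' 0 = 1`, `f` omits `w₀`, and
`P z = -z f'(z)/(f z - w₀) - p/(z - p) + p z/(1 - p z)` extends holomorphically
to the unit disc with `P 0 = 1` and `Re (P z) > 0` there. -/
def SigmaStarWith (p : ℝ) (w₀ : ℂ) (f P : ℂ → ℂ) : Prop :=
  (∃ g : ℂ → ℂ, DifferentiableOn ℂ g (ball (0 : ℂ) 1) ∧ g p ≠ 0 ∧
      ∀ z ∈ ball (0 : ℂ) 1, z ≠ (p : ℂ) → f z = g z / (z - p)) ∧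
  f 0 = 0 ∧ deriv f 0 = 1 ∧
  (∀ z ∈ ball (0 : ℂ) 1, z ≠ (p : ℂ) → f z ≠ w₀) ∧
  DifferentiableOn ℂ P (ball (0 : ℂ) 1) ∧ P 0 = 1 ∧
  (∀ z ∈ ball (0 : ℂ) 1, 0 < (P z).re) ∧
  (∀ z ∈ ball (0 : ℂ) 1, z ≠ (p : ℂ) →
    P z = -z * deriv f z / (f z - w₀) - p / (z - p) + p * z / (1 - p * z))

/-- `f` belongs to the class `Σ*(p, w₀)`. -/
def SigmaStar (p : ℝ) (w₀ : ℂ) (f : ℂ → ℂ) : Prop :=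
  ∃ P : ℂ → ℂ, SigmaStarWith p w₀ f P

/-- `ω` is the Schwarz function associated to `P`, i.e. a holomorphic self-map of
the unit disc fixing `0` with `P = (1 + ω)/(1 - ω)`. -/
def SchwarzOf (P ω : ℂ → ℂ) : Prop :=
  DifferentiableOn ℂ ω (ball (0 : ℂ) 1) ∧
  MapsTo ω (ball (0 : ℂ) 1) (ball (0 : ℂ) 1) ∧ ω 0 = 0 ∧
  ∀ z ∈ ball (0 : ℂ) 1, P z = (1 + ω z) / (1 - ω z)

lemma analyticAt_deriv' {f : ℂ → ℂ} {x : ℂ} (h : AnalyticAt ℂ f x) :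
    AnalyticAt ℂ (deriv f) x := by
  have : deriv f = fun z => ContinuousLinearMap.apply ℂ ℂ (1:ℂ) (fderiv ℂ f z) := rfl
  rw [this]
  exact ((ContinuousLinearMap.apply ℂ ℂ 1).analyticAt _).comp h.fderiv

noncomputable def Rfun (p : ℝ) : ℂ → ℂ := fun z => -(p:ℂ)/(z - p) + (p:ℂ)*z/(1 - p*z)
noncomputable def R1fun (p : ℝ) : ℂ → ℂ := fun z => (p:ℂ)/(z-p)^2 + (p:ℂ)/(1 - p*z)^2

lemma Rfun_zero {p : ℝ} (hp : (p:ℂ) ≠ 0) : Rfun p 0 = 1 := by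
  simp [Rfun, neg_div, hp]

lemma R1fun_zero {p : ℝ} (hp : (p:ℂ) ≠ 0) : R1fun p 0 = 1/(p:ℂ) + p := by
  simp only [R1fun, zero_sub, mul_zero, sub_zero, one_pow, div_one, neg_sq]
  field_simp

lemma Rfun_hasDeriv {p : ℝ} {z : ℂ} (h1 : z ≠ (p:ℂ)) (h2 : 1-(p:ℂ)*z ≠ 0) :
    HasDerivAt (Rfun p) (R1fun p z) z := by
  have hzp : z - (p:ℂ) ≠ 0 := sub_ne_zero.mpr h1
  have d1 : HasDerivAt (fun z : ℂ => -(p:ℂ)/(z - p))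
      ((0 * (z - p) - (-(p:ℂ)) * 1) / (z - p)^2) z :=
    (hasDerivAt_const z (-(p:ℂ))).div ((hasDerivAt_id z).sub_const _) hzp
  have d2 : HasDerivAt (fun z : ℂ => (p:ℂ)*z/(1 - p*z))
      (((p:ℂ) * (1 - p*z) - (p:ℂ)*z * (0 - p*1)) / (1 - p*z)^2) z := by
    have hu : HasDerivAt (fun z : ℂ => (p:ℂ)*z) (p:ℂ) z := by
      simpa using (hasDerivAt_id z).const_mul (p:ℂ)
    have hv : HasDerivAt (fun z : ℂ => 1 - (p:ℂ)*z) (0 - (p:ℂ)*1) z := by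
      have : HasDerivAt (fun z : ℂ => (p:ℂ)*z) ((p:ℂ)*1) z := by
        simpa using (hasDerivAt_id z).const_mul (p:ℂ)
      simpa using this.const_sub 1
    exact hu.div hv h2
  have := d1.add d2
  refine this.congr_deriv ?_
  simp only [R1fun]
  field_simp
  ring

lemma R1fun_hasDeriv {p : ℝ} (hp : (p:ℂ) ≠ 0) :
    HasDerivAt (R1fun p) (2/(p:ℂ)^2 + 2*(p:ℂ)^2) 0 := by
  have hzp : ((0:ℂ) - p) ≠ 0 := by simpa using hp
  have hzp2 : ((0:ℂ) - p)^2 ≠ 0 := pow_ne_zero _ hzp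
  have h2 : (1 - (p:ℂ)*0) ≠ 0 := by simp
  have h22 : ((1:ℂ) - (p:ℂ)*0)^2 ≠ 0 := pow_ne_zero _ h2
  have d1 : HasDerivAt (fun z : ℂ => (p:ℂ)/(z-p)^2)
      ((0 * ((0:ℂ)-p)^2 - (p:ℂ) * (2*((0:ℂ)-p)^1 * 1)) / (((0:ℂ)-p)^2)^2) 0 := by
    have hv : HasDerivAt (fun z : ℂ => (z-(p:ℂ))^2) (2*((0:ℂ)-p)^1 * 1) 0 :=
      ((hasDerivAt_id 0).sub_const (p:ℂ)).pow 2
    exact (hasDerivAt_const 0 (p:ℂ)).div hv hzp2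
  have d2 : HasDerivAt (fun z : ℂ => (p:ℂ)/(1-p*z)^2)
      ((0 * ((1:ℂ)-p*0)^2 - (p:ℂ) * (2*((1:ℂ)-p*0)^1 * (0 - p*1))) / (((1:ℂ)-p*0)^2)^2) 0 := by
    have hw : HasDerivAt (fun z : ℂ => 1 - (p:ℂ)*z) (0 - (p:ℂ)*1) 0 := by
      have : HasDerivAt (fun z : ℂ => (p:ℂ)*z) ((p:ℂ)*1) 0 := by
        simpa using (hasDerivAt_id 0).const_mul (p:ℂ)
      simpa using this.const_sub 1
    have hv : HasDerivAt (fun z : ℂ => ((1:ℂ)-p*z)^2) (2*((1:ℂ)-p*0)^1 * (0 - p*1)) 0 := hw.pow 2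
    exact (hasDerivAt_const 0 (p:ℂ)).div hv h22
  have := d1.add d2
  refine this.congr_deriv ?_
  field_simp
  ring

theorem stmt_6 (p : ℝ) (hp : 0 < p ∧ p < 1) (w₀ : ℂ) (hw : w₀ ≠ 0)
    (f P : ℂ → ℂ) (hf : SigmaStarWith p w₀ f P) :
    iteratedDeriv 2 P 0 / 2 =
      (p : ℂ) ^ 2 + 1 / (p : ℂ) ^ 2 + (deriv P 0 - ((p : ℂ) + 1 / p)) ^ 2 +
        2 * a2 f * (deriv P 0 - ((p : ℂ) + 1 / p)) := by
  obtain ⟨hp0, hp1⟩ := hp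
  obtain ⟨⟨g, hg, hgp, hfg⟩, hf0, hf'0, hfw, hPd, hP0, hPre, hPeq⟩ := hf
  have hpC : (p:ℂ) ≠ 0 := Complex.ofReal_ne_zero.mpr hp0.ne'
  have h0ne : (0:ℂ) ≠ (p:ℂ) := fun h => hpC h.symm
  have hs_open : IsOpen (ball (0:ℂ) 1 ∩ {(p:ℂ)}ᶜ) :=
    isOpen_ball.inter isOpen_compl_singleton
  have h0s : (0:ℂ) ∈ ball (0:ℂ) 1 ∩ {(p:ℂ)}ᶜ :=
    ⟨mem_ball_self one_pos, fun h => h0ne (Set.mem_singleton_iff.mp h)⟩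
  have hs_nhds : ball (0:ℂ) 1 ∩ {(p:ℂ)}ᶜ ∈ 𝓝 (0:ℂ) := hs_open.mem_nhds h0s
  have hone : ∀ z ∈ ball (0:ℂ) 1, (1:ℂ) - p*z ≠ 0 := by
    intro z hz h
    rw [sub_eq_zero] at h
    have h1 : ‖(p:ℂ)*z‖ < 1 := by
      rw [norm_mul, Complex.norm_real]
      have hz' : ‖z‖ < 1 := mem_ball_zero_iff.mp hz
      calc ‖p‖ * ‖z‖ ≤ p * ‖z‖ := by rw [Real.norm_eq_abs, abs_of_pos hp0]
        _ < p * 1 := by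
            rcases eq_or_lt_of_le (norm_nonneg z) with h0 | h0
            · simpa [← h0] using hp0
            · exact mul_lt_mul_of_pos_left hz' hp0
        _ < 1 := by simpa using hp1
    rw [← h] at h1
    simp at h1
  have hfs : DifferentiableOn ℂ f (ball (0:ℂ) 1 ∩ {(p:ℂ)}ᶜ) := by
    have hd : DifferentiableOn ℂ (fun z => g z / (z - p)) (ball (0:ℂ) 1 ∩ {(p:ℂ)}ᶜ) := by
      apply DifferentiableOn.div (hg.mono inter_subset_left)
      · exact differentiableOn_id.sub (differentiableOn_const _)
      · intro z hz; exact sub_ne_zero.mpr hz.2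
    exact hd.congr fun z hz => hfg z hz.1 hz.2
  have hAf : AnalyticAt ℂ f 0 := hfs.analyticAt hs_nhds
  have hAP : AnalyticAt ℂ P 0 :=
    hPd.analyticAt (isOpen_ball.mem_nhds (mem_ball_self one_pos))
  have hAdf : AnalyticAt ℂ (deriv f) 0 := analyticAt_deriv' hAf
  have hAddf : AnalyticAt ℂ (deriv (deriv f)) 0 := analyticAt_deriv' hAdf
  have hAdP : AnalyticAt ℂ (deriv P) 0 := analyticAt_deriv' hAP
  -- the key identity near 0
  have hkey : (fun z => (f z - w₀) * P z) =ᶠ[𝓝 (0:ℂ)]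
      (fun z => -z * deriv f z + (f z - w₀) * Rfun p z) := by
    filter_upwards [hs_nhds] with z hz
    have hz1 : z ∈ ball (0:ℂ) 1 := hz.1
    have hz2 : z ≠ (p:ℂ) := hz.2
    have h1 : f z - w₀ ≠ 0 := sub_ne_zero.mpr (hfw z hz1 hz2)
    have hzp : z - (p:ℂ) ≠ 0 := sub_ne_zero.mpr hz2
    have h2 : (1:ℂ) - p*z ≠ 0 := hone z hz1
    rw [hPeq z hz1 hz2]
    simp only [Rfun]
    field_simp
    ring
  -- first derivatives at 0
  have hdf : HasDerivAt f (deriv f 0) 0 := hAf.differentiableAt.hasDerivAt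
  have hdP : HasDerivAt P (deriv P 0) 0 := hAP.differentiableAt.hasDerivAt
  have hddf0 : HasDerivAt (deriv f) (deriv (deriv f) 0) 0 := hAdf.differentiableAt.hasDerivAt
  have hddP0 : HasDerivAt (deriv P) (deriv (deriv P) 0) 0 := hAdP.differentiableAt.hasDerivAt
  have hd3f0 : HasDerivAt (deriv (deriv f)) (deriv (deriv (deriv f)) 0) 0 :=
    hAddf.differentiableAt.hasDerivAt
  have hneg : HasDerivAt (fun z : ℂ => -z) (-1) 0 := (hasDerivAt_id 0).neg
  have hR0 : HasDerivAt (Rfun p) (R1fun p 0) 0 := Rfun_hasDeriv h0ne (by simpa using hone 0 (mem_ball_self one_pos))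
  have hL1 : HasDerivAt (fun z => (f z - w₀) * P z)
      (deriv f 0 * P 0 + (f 0 - w₀) * deriv P 0) 0 := (hdf.sub_const w₀).mul hdP
  have hRt1 : HasDerivAt (fun z => -z * deriv f z + (f z - w₀) * Rfun p z)
      ((-1 * deriv f 0 + -(0:ℂ) * deriv (deriv f) 0) +
        (deriv f 0 * Rfun p 0 + (f 0 - w₀) * R1fun p 0)) 0 :=
    (hneg.mul hddf0).add ((hdf.sub_const w₀).mul hR0)
  have E1 := hkey.deriv_eq
  rw [hL1.deriv, hRt1.deriv] at E1
  -- derivative functions near 0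
  have hLd : deriv (fun z => (f z - w₀) * P z) =ᶠ[𝓝 (0:ℂ)]
      (fun z => deriv f z * P z + (f z - w₀) * deriv P z) := by
    filter_upwards [hAf.eventually_analyticAt, hAP.eventually_analyticAt] with z h1 h2
    exact ((h1.differentiableAt.hasDerivAt.sub_const w₀).mul
      h2.differentiableAt.hasDerivAt).deriv
  have hRtd : deriv (fun z => -z * deriv f z + (f z - w₀) * Rfun p z) =ᶠ[𝓝 (0:ℂ)]
      (fun z => (-1 * deriv f z + -z * deriv (deriv f) z) +
        (deriv f z * Rfun p z + (f z - w₀) * R1fun p z)) := by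
    filter_upwards [hAf.eventually_analyticAt, hAdf.eventually_analyticAt, hs_nhds]
      with z h1 h2 hz
    exact (((hasDerivAt_id z).neg.mul h2.differentiableAt.hasDerivAt).add
      ((h1.differentiableAt.hasDerivAt.sub_const w₀).mul
        (Rfun_hasDeriv hz.2 (hone z hz.1)))).deriv
  have E2 := ((hLd.symm.trans hkey.deriv).trans hRtd).deriv_eq
  have hφ : HasDerivAt (fun z => deriv f z * P z + (f z - w₀) * deriv P z)
      ((deriv (deriv f) 0 * P 0 + deriv f 0 * deriv P 0) +
        (deriv f 0 * deriv P 0 + (f 0 - w₀) * deriv (deriv P) 0)) 0 :=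
    (hddf0.mul hdP).add ((hdf.sub_const w₀).mul hddP0)
  have hψ : HasDerivAt (fun z => (-1 * deriv f z + -z * deriv (deriv f) z) +
        (deriv f z * Rfun p z + (f z - w₀) * R1fun p z))
      (((-1) * deriv (deriv f) 0 +
          ((-1) * deriv (deriv f) 0 + -(0:ℂ) * deriv (deriv (deriv f)) 0)) +
        ((deriv (deriv f) 0 * Rfun p 0 + deriv f 0 * R1fun p 0) +
          (deriv f 0 * R1fun p 0 + (f 0 - w₀) * (2/(p:ℂ)^2 + 2*(p:ℂ)^2)))) 0 := by
    exact ((HasDerivAt.const_mul (-1 : ℂ) hddf0).add (hneg.mul hd3f0)).add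
      ((hddf0.mul hR0).add ((hdf.sub_const w₀).mul (R1fun_hasDeriv hpC)))
  rw [hφ.deriv, hψ.deriv] at E2
  -- substitute known values
  rw [hf0, hf'0, hP0, Rfun_zero hpC, R1fun_zero hpC] at E1 E2
  -- extract coefficient relations
  have hb2 : deriv P 0 = 1/w₀ + 1/(p:ℂ) + p := by
    field_simp at E1 ⊢
    linear_combination -E1
  have hq1 : w₀ * deriv (deriv P) 0 = 2*deriv (deriv f) 0 + 2*deriv P 0
      - 2*(1/(p:ℂ)+(p:ℂ)) + 2*w₀*(1/(p:ℂ)^2+(p:ℂ)^2) := by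
    linear_combination -E2
  have hq2 : deriv (deriv P) 0 =
      2 * deriv (deriv f) 0 / w₀ + 2/w₀^2 + 2*(p:ℂ)^2 + 2/(p:ℂ)^2 := by
    rw [hb2] at hq1
    have h3 : deriv (deriv P) 0 = (w₀ * deriv (deriv P) 0) / w₀ := by
      field_simp
    rw [h3, hq1, div_eq_iff hw, eq_comm]
    field_simp
    ring
  have hit2 : iteratedDeriv 2 P 0 = deriv (deriv P) 0 := by
    rw [iteratedDeriv_succ, iteratedDeriv_one]
  have hitf : a2 f = deriv (deriv f) 0 / 2 := by
    rw [a2, iteratedDeriv_succ, iteratedDeriv_one]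
  rw [hit2, hitf, hq2, hb2]
  have h : (1/w₀ + 1/(p:ℂ) + (p:ℂ)) - ((p:ℂ) + 1/(p:ℂ)) = 1/w₀ := by ring
  rw [h, div_eq_iff (two_ne_zero)]
  field_simp
  ring
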